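/- Let f ∈ H₂(Λ₊) with coefficient sequence f̂. Then: (i) Zf ∈ H₂(Λ₊) and its coefficient sequence is the shifted sequence (0, f̂(0), f̂(1), …); (ii) δx f ∈ H₂(Λ₊) and its coefficient sequence is n ↦ f̂(n+1); (iii) for all f, g ∈ H₂(Λ₊), ⟨Zf, g⟩ = ⟨f, δx g⟩, i.e., δx is the adjoint of Z on H₂(Λ₊). -/

import Mathlib

open Complex Finset GaussianInt

noncomputable section

/-- The lattice point `i` in the Gaussian integers. -/
def ii : GaussianInt := ⟨0, 1⟩

/-- `f` is discrete analytic on the whole lattice `Λ = ℤ + iℤ`. -/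
def DAnalytic (f : GaussianInt → ℂ) : Prop :=
  ∀ z : GaussianInt,
    (f (z + 1 + ii) - f z) / (1 + Complex.I) = (f (z + 1) - f (z + ii)) / (1 - Complex.I)

/-- `f` is discrete analytic on the right half lattice `Λ₊ = {z : Re z ≥ 0}`. -/
def DAnalyticOn (f : GaussianInt → ℂ) : Prop :=
  ∀ z : GaussianInt, 0 ≤ z.re →
    (f (z + 1 + ii) - f z) / (1 + Complex.I) = (f (z + 1) - f (z + ii)) / (1 - Complex.I)

/-- `γ 0, γ 1, …, γ n` is a path in the lattice from `a` to `b`: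
consecutive points are at distance `1`. -/
def IsPath (γ : ℕ → GaussianInt) (n : ℕ) (a b : GaussianInt) : Prop :=
  γ 0 = a ∧ γ n = b ∧ ∀ k < n, ‖(γ (k + 1) : ℂ) - (γ k : ℂ)‖ = 1

/-- The discrete integral `∫_γ f δz` along the path `γ 0, …, γ n`. -/
def discInt (f : GaussianInt → ℂ) (γ : ℕ → GaussianInt) (n : ℕ) : ℂ :=
  ∑ k ∈ Finset.range n, ((f (γ k) + f (γ (k + 1))) / 2) * ((γ (k + 1) : ℂ) - (γ k : ℂ))

/-- The canonical lattice path from `0` to `z`: first along the real axis, then vertically. -/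
def cpath (z : GaussianInt) (k : ℕ) : GaussianInt :=
  ⟨z.re.sign * ((min k z.re.natAbs : ℕ) : ℤ),
   z.im.sign * ((min k (z.re.natAbs + z.im.natAbs) - z.re.natAbs : ℕ) : ℤ)⟩

/-- The length of the canonical path from `0` to `z`. -/
def cpathLen (z : GaussianInt) : ℕ := z.re.natAbs + z.im.natAbs

/-- The operator `Z`: `Zf(z) = (f(0) - f(z))/2 + ∫_0^z f δz`, the integral being taken
along the canonical path (for discrete analytic `f` the integral is path-independent). -/
def Zop (f : GaussianInt → ℂ) : GaussianInt → ℂ := fun z =>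
  (f 0 - f z) / 2 + discInt f (cpath z) (cpathLen z)

/-- The basic discrete analytic polynomials `z⁽ⁿ⁾ = Zⁿ1`. -/
def zpoly (n : ℕ) : GaussianInt → ℂ := Zop^[n] (fun _ => 1)

/-- `α₊ = (1+i)/2`. -/
def aPlus : ℂ := (1 + Complex.I) / 2
/-- `α₋ = (1-i)/2`. -/
def aMinus : ℂ := (1 - Complex.I) / 2

/-- The difference operator `δx`. -/
def dxOp (f : GaussianInt → ℂ) : GaussianInt → ℂ := fun z => f (z + 1) - f z
/-- The difference operator `δy`. -/
def dyOp (f : GaussianInt → ℂ) : GaussianInt → ℂ := fun z => f (z + ii) - f z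

/-- `f` belongs to the Hardy space `H₂(Λ₊)` with coefficient sequence `c`:
`f(z) = Σ c(n) z⁽ⁿ⁾(z)` on `Λ₊` and `Σ |c(n)|² < ∞`. -/
def MemH2 (f : GaussianInt → ℂ) (c : ℕ → ℂ) : Prop :=
  Summable (fun n => ‖c n‖ ^ 2) ∧
  ∀ z : GaussianInt, 0 ≤ z.re → HasSum (fun n => c n * zpoly n z) (f z)


-- basic facts about add re/im
lemma add_one_re (z : GaussianInt) : (z + 1).re = z.re + 1 := by simp [Zsqrtd.add_def]
lemma add_one_im (z : GaussianInt) : (z + 1).im = z.im := by simp [Zsqrtd.add_def]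
lemma add_ii_re (z : GaussianInt) : (z + ii).re = z.re := by simp [Zsqrtd.add_def, ii]
lemma add_ii_im (z : GaussianInt) : (z + ii).im = z.im + 1 := by simp [Zsqrtd.add_def, ii]

lemma cpath_last (z : GaussianInt) : cpath z (cpathLen z) = z := by
  unfold cpath cpathLen
  rw [Zsqrtd.ext_iff]
  constructor
  · have h1 : min (z.re.natAbs + z.im.natAbs) z.re.natAbs = z.re.natAbs :=
      min_eq_right (Nat.le_add_right _ _)
    simp only [h1, Int.sign_mul_natAbs]
  · have h2 : min (z.re.natAbs + z.im.natAbs) (z.re.natAbs + z.im.natAbs)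
        - z.re.natAbs = z.im.natAbs := by omega
    simp only [h2, Int.sign_mul_natAbs]

lemma cpath_re_nonneg (z : GaussianInt) (hz : 0 ≤ z.re) (k : ℕ) : 0 ≤ (cpath z k).re := by
  exact mul_nonneg (Int.sign_nonneg_iff.mpr hz) (Int.natCast_nonneg _)

-- path extension lemma
lemma discInt_ext (g : GaussianInt → ℂ) (a b : GaussianInt)
    (hlen : cpathLen b = cpathLen a + 1)
    (heq : ∀ k ≤ cpathLen a, cpath b k = cpath a k) :
    discInt g (cpath b) (cpathLen b) = discInt g (cpath a) (cpathLen a)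
      + (g a + g b) / 2 * ((b : ℂ) - (a : ℂ)) := by
  unfold discInt
  rw [hlen, Finset.sum_range_succ]
  congr 1
  · apply Finset.sum_congr rfl
    intro k hk
    simp only [Finset.mem_range] at hk
    rw [heq k (le_of_lt hk), heq (k+1) hk]
  · rw [heq _ le_rfl, cpath_last a, ← hlen, cpath_last b]

lemma toComplex_ii : ((ii : GaussianInt) : ℂ) = Complex.I := by
  simp [ii, toComplex_def]

lemma cpath_up (z : GaussianInt) (h : 0 ≤ z.im) (k : ℕ) (hk : k ≤ cpathLen z) :
    cpath (z + ii) k = cpath z k := by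
  have hre : (z + ii).re = z.re := add_ii_re z
  have him : (z + ii).im = z.im + 1 := add_ii_im z
  unfold cpathLen at hk
  rw [Zsqrtd.ext_iff]
  refine ⟨by simp only [cpath, hre], ?_⟩
  show (z+ii).im.sign * ((min k ((z+ii).re.natAbs + (z+ii).im.natAbs) - (z+ii).re.natAbs : ℕ) : ℤ)
      = z.im.sign * ((min k (z.re.natAbs + z.im.natAbs) - z.re.natAbs : ℕ) : ℤ)
  rw [hre, him]
  rcases lt_or_eq_of_le h with h' | h'
  · rw [Int.sign_eq_one_of_pos h', Int.sign_eq_one_of_pos (by omega)]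
    congr 1
    omega
  · rw [← h']
    norm_num
    omega

lemma cpath_down (z : GaussianInt) (h : z.im < 0) (k : ℕ) (hk : k ≤ cpathLen (z + ii)) :
    cpath z k = cpath (z + ii) k := by
  have hre : (z + ii).re = z.re := add_ii_re z
  have him : (z + ii).im = z.im + 1 := add_ii_im z
  unfold cpathLen at hk
  rw [hre, him] at hk
  rw [Zsqrtd.ext_iff]
  refine ⟨by simp only [cpath, hre], ?_⟩
  show z.im.sign * ((min k (z.re.natAbs + z.im.natAbs) - z.re.natAbs : ℕ) : ℤ)
      = (z+ii).im.sign * ((min k ((z+ii).re.natAbs + (z+ii).im.natAbs) - (z+ii).re.natAbs : ℕ) : ℤ)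
  rw [hre, him]
  rcases lt_or_eq_of_le (by omega : z.im + 1 ≤ 0) with h' | h'
  · rw [Int.sign_eq_neg_one_of_neg h', Int.sign_eq_neg_one_of_neg (by omega)]
    congr 2
    omega
  · rw [h']
    have h2 : z.im = -1 := by omega
    rw [h2]
    norm_num
    omega

lemma discInt_vert (g : GaussianInt → ℂ) (z : GaussianInt) :
    discInt g (cpath (z + ii)) (cpathLen (z + ii))
      = discInt g (cpath z) (cpathLen z) + (g z + g (z + ii)) / 2 * Complex.I := by
  have hre : (z + ii).re = z.re := add_ii_re z
  have him : (z + ii).im = z.im + 1 := add_ii_im z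
  have hcast : ((z + ii : GaussianInt) : ℂ) - (z : ℂ) = Complex.I := by
    simp [toComplex_ii]
  rcases le_or_gt 0 z.im with h | h
  · have key := discInt_ext g z (z + ii)
      (by unfold cpathLen; rw [hre, him]; omega)
      (cpath_up z h)
    rw [key, hcast]
  · have key := discInt_ext g (z + ii) z
      (by unfold cpathLen; rw [hre, him]; omega)
      (cpath_down z h)
    have hcast2 : (z : ℂ) - ((z + ii : GaussianInt) : ℂ) = -Complex.I := by
      simp [toComplex_ii]
    rw [key, hcast2]
    ring

-- horizontal base : z.im = 0
lemma cpath_right (z : GaussianInt) (hz : 0 ≤ z.re) (him : z.im = 0) (k : ℕ)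
    (hk : k ≤ cpathLen z) : cpath (z + 1) k = cpath z k := by
  have hre : (z + 1).re = z.re + 1 := add_one_re z
  have him1 : (z + 1).im = z.im := add_one_im z
  unfold cpathLen at hk
  rw [Zsqrtd.ext_iff]
  constructor
  · show (z+1).re.sign * ((min k (z+1).re.natAbs : ℕ) : ℤ)
        = z.re.sign * ((min k z.re.natAbs : ℕ) : ℤ)
    rw [hre]
    rw [him] at hk
    simp only [Int.natAbs_zero, add_zero] at hk
    rw [Int.sign_eq_one_of_pos (by omega)]
    rcases lt_or_eq_of_le hz with h' | h'
    · rw [Int.sign_eq_one_of_pos h']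
      congr 1
      omega
    · rw [← h']
      norm_num
      omega
  · show (z+1).im.sign * ((min k ((z+1).re.natAbs + (z+1).im.natAbs) - (z+1).re.natAbs : ℕ) : ℤ)
        = z.im.sign * ((min k (z.re.natAbs + z.im.natAbs) - z.re.natAbs : ℕ) : ℤ)
    rw [him1, him]
    norm_num

lemma toComplex_one' : ((1 : GaussianInt) : ℂ) = 1 := by simp

-- horizontal step (needs DA)
lemma discInt_horiz (g : GaussianInt → ℂ) (hg : DAnalyticOn g) (z : GaussianInt) (hz : 0 ≤ z.re) :
    discInt g (cpath (z + 1)) (cpathLen (z + 1))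
      = discInt g (cpath z) (cpathLen z) + (g z + g (z + 1)) / 2 := by
  suffices h : ∀ m : ℤ, ∀ z : GaussianInt, 0 ≤ z.re → z.im = m →
      discInt g (cpath (z + 1)) (cpathLen (z + 1))
        = discInt g (cpath z) (cpathLen z) + (g z + g (z + 1)) / 2 from h z.im z hz rfl
  intro m
  induction m using Int.induction_on with
  | zero =>
    intro z hz him
    have key := discInt_ext g z (z + 1)
      (by unfold cpathLen; rw [add_one_re, add_one_im, him]; simp; omega)
      (cpath_right z hz him)
    rw [key]
    have : ((z + 1 : GaussianInt) : ℂ) - (z : ℂ) = 1 := by simp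
    rw [this, mul_one]
  | succ m ih =>
    intro z hz him
    set w : GaussianInt := ⟨z.re, m⟩ with hw
    have hwz : w + ii = z := by
      rw [Zsqrtd.ext_iff]
      refine ⟨by rw [add_ii_re], by rw [add_ii_im]; show (m:ℤ) + 1 = z.im; omega⟩
    have hwre : 0 ≤ w.re := hz
    have ihw := ih w hwre rfl
    have v1 := discInt_vert g w
    have v2 := discInt_vert g (w + 1)
    have hda := hg w hwre
    have hI : (1 + Complex.I) ≠ 0 := by
      intro hh; have := congrArg Complex.im hh; simp at this
    have hI2 : (1 - Complex.I) ≠ 0 := by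
      intro hh; have := congrArg Complex.im hh; simp at this
    rw [div_eq_div_iff hI hI2] at hda
    have hc1 : z + 1 = w + 1 + ii := by rw [← hwz]; ring
    have hc2 : w + ii + 1 = w + 1 + ii := by ring
    rw [← hwz, hc2, v2, v1, hc2] at *
    linear_combination ihw - (1/2 : ℂ) * hda
  | pred m ih =>
    intro z hz him
    have hzre : 0 ≤ (z + ii).re := by rw [add_ii_re]; exact hz
    have ihw := ih (z + ii) hzre (by rw [add_ii_im]; omega)
    have v1 := discInt_vert g z
    have v2 := discInt_vert g (z + 1)
    have hda := hg z hz
    have hI : (1 + Complex.I) ≠ 0 := by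
      intro hh; have := congrArg Complex.im hh; simp at this
    have hI2 : (1 - Complex.I) ≠ 0 := by
      intro hh; have := congrArg Complex.im hh; simp at this
    rw [div_eq_div_iff hI hI2] at hda
    have hc2 : z + ii + 1 = z + 1 + ii := by ring
    rw [hc2] at ihw
    rw [v2] at ihw
    rw [v1] at ihw
    linear_combination ihw + (1/2 : ℂ) * hda

lemma Zop_dx (g : GaussianInt → ℂ) (hg : DAnalyticOn g) (z : GaussianInt) (hz : 0 ≤ z.re) :
    Zop g (z + 1) - Zop g z = g z := by
  unfold Zop
  rw [discInt_horiz g hg z hz]; ring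

lemma Zop_dy (g : GaussianInt → ℂ) (z : GaussianInt) :
    Zop g (z + ii) - Zop g z = (g z - g (z + ii)) / 2 + (g z + g (z + ii)) / 2 * Complex.I := by
  unfold Zop
  rw [discInt_vert g z]; ring

lemma Zop_DA (g : GaussianInt → ℂ) (hg : DAnalyticOn g) : DAnalyticOn (Zop g) := by
  intro z hz
  have h1 : Zop g (z + 1) - Zop g z = g z := Zop_dx g hg z hz
  have h2 : Zop g (z + ii) - Zop g z = (g z - g (z + ii)) / 2 + (g z + g (z + ii)) / 2 * Complex.I :=
    Zop_dy g z
  have h3 : Zop g (z + ii + 1) - Zop g (z + ii) = g (z + ii) := by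
    apply Zop_dx g hg; rw [add_ii_re]; exact hz
  have h4 : z + 1 + ii = z + ii + 1 := by ring
  rw [h4]
  have hI : (1 + Complex.I) ≠ 0 := by
    intro h; have := congrArg Complex.im h; simp at this
  have hI2 : (1 - Complex.I) ≠ 0 := by
    intro h; have := congrArg Complex.im h; simp at this
  rw [div_eq_div_iff hI hI2]
  linear_combination (1 - Complex.I) * h3 + (1 - Complex.I) * h2 - (1 + Complex.I) * h1
    + (1 + Complex.I) * h2

lemma zpoly_DA (n : ℕ) : DAnalyticOn (zpoly n) := by
  induction n with
  | zero => intro z hz; simp [zpoly]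
  | succ n ih =>
    rw [zpoly, Function.iterate_succ_apply']
    exact Zop_DA _ ih

lemma zpoly_succ (n : ℕ) : zpoly (n+1) = Zop (zpoly n) := by
  rw [zpoly, Function.iterate_succ_apply']; rfl

lemma dx_zpoly (n : ℕ) (z : GaussianInt) (hz : 0 ≤ z.re) :
    zpoly (n+1) (z+1) - zpoly (n+1) z = zpoly n z := by
  rw [zpoly_succ]; exact Zop_dx _ (zpoly_DA n) z hz
lemma hasSum_Zop (c : ℕ → ℂ) (f : GaussianInt → ℂ)
    (h : ∀ w : GaussianInt, 0 ≤ w.re → HasSum (fun n => c n * zpoly n w) (f w))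
    (z : GaussianInt) (hz : 0 ≤ z.re) :
    HasSum (fun n => c n * zpoly (n + 1) z) (Zop f z) := by
  have h0 : HasSum (fun n => c n * zpoly n 0) (f 0) := h 0 (by simp)
  have hz' := h z hz
  have hk : ∀ k : ℕ, HasSum (fun n => c n * zpoly n (cpath z k)) (f (cpath z k)) :=
    fun k => h _ (cpath_re_nonneg z hz k)
  have main : HasSum (fun n => (c n * zpoly n 0 - c n * zpoly n z) / 2
      + ∑ k ∈ Finset.range (cpathLen z),
        ((c n * zpoly n (cpath z k) + c n * zpoly n (cpath z (k + 1))) / 2)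
          * ((cpath z (k + 1) : ℂ) - (cpath z k : ℂ))) (Zop f z) := by
    unfold Zop discInt
    exact ((h0.sub hz').div_const 2).add
      (hasSum_sum fun k _ => (((hk k).add (hk (k + 1))).div_const 2).mul_right _)
  have hfun : (fun n => c n * zpoly (n + 1) z) = fun n => (c n * zpoly n 0 - c n * zpoly n z) / 2
      + ∑ k ∈ Finset.range (cpathLen z),
        ((c n * zpoly n (cpath z k) + c n * zpoly n (cpath z (k + 1))) / 2)
          * ((cpath z (k + 1) : ℂ) - (cpath z k : ℂ)) := by
    funext n
    rw [zpoly_succ]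
    show c n * ((zpoly n 0 - zpoly n z) / 2 + discInt (zpoly n) (cpath z) (cpathLen z)) = _
    unfold discInt
    rw [mul_add, Finset.mul_sum]
    congr 1
    · ring
    · exact Finset.sum_congr rfl fun k _ => by ring
  rw [hfun]
  exact main


/-- For `f ∈ H₂(Λ₊)` with coefficients `f̂`: (i) `Zf ∈ H₂(Λ₊)` with the
shifted coefficient sequence `(0, f̂(0), f̂(1), …)`; (ii) `δx f ∈ H₂(Λ₊)` with coefficients
`n ↦ f̂(n+1)`; (iii) `⟨Zf, g⟩ = ⟨f, δx g⟩` for all `g ∈ H₂(Λ₊)` (inner products being computed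
from the coefficient sequences), i.e. `δx` is the adjoint of `Z` on `H₂(Λ₊)`. -/
theorem stmt13 (f : GaussianInt → ℂ) (c : ℕ → ℂ) (hf : MemH2 f c) :
    MemH2 (Zop f) (fun n => if n = 0 then 0 else c (n - 1)) ∧
    MemH2 (dxOp f) (fun n => c (n + 1)) ∧
    ∀ (g : GaussianInt → ℂ) (d : ℕ → ℂ), MemH2 g d →
      ∑' n : ℕ, (if n = 0 then 0 else c (n - 1)) * (starRingEnd ℂ) (d n)
        = ∑' n : ℕ, c n * (starRingEnd ℂ) (d (n + 1)) := by
  obtain ⟨hsum, hrep⟩ := hf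
  refine ⟨⟨?_, ?_⟩, ⟨?_, ?_⟩, ?_⟩
  · -- summability of shifted coefficients
    have h1 : Summable (fun n : ℕ => (fun m : ℕ =>
        ‖(if m = 0 then (0:ℂ) else c (m - 1))‖ ^ 2) (n + 1)) := by
      simpa using hsum
    exact (summable_nat_add_iff (f := fun m : ℕ =>
        ‖(if m = 0 then (0:ℂ) else c (m - 1))‖ ^ 2) 1).mp h1
  · intro z hz
    have hZ := hasSum_Zop c f hrep z hz
    have h1 : HasSum (fun n : ℕ => (fun m : ℕ =>
        (if m = 0 then (0:ℂ) else c (m - 1)) * zpoly m z) (n + 1)) (Zop f z) := by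
      simpa using hZ
    have h2 := (hasSum_nat_add_iff (f := fun m : ℕ =>
        (if m = 0 then (0:ℂ) else c (m - 1)) * zpoly m z) 1).mp h1
    simpa using h2
  · exact (summable_nat_add_iff (f := fun m : ℕ => ‖c m‖ ^ 2) 1).mpr hsum
  · intro z hz
    have h1 := hrep (z + 1) (by rw [add_one_re]; omega)
    have h2 := hrep z hz
    have hb : HasSum (fun n => c n * zpoly n (z + 1) - c n * zpoly n z) (dxOp f z) := h1.sub h2
    have hb' : HasSum (fun m : ℕ => c m * zpoly m (z + 1) - c m * zpoly m z)
        (dxOp f z + ∑ i ∈ Finset.range 1, (c i * zpoly i (z + 1) - c i * zpoly i z)) := by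
      have hzero : ∀ w : GaussianInt, zpoly 0 w = 1 := fun w => rfl
      rw [Finset.sum_range_one, hzero, hzero, mul_one, sub_self, add_zero]
      exact hb
    have h3 := (hasSum_nat_add_iff (f := fun m : ℕ =>
        c m * zpoly m (z + 1) - c m * zpoly m z) 1).mpr hb'
    have heq : (fun n : ℕ => c (n + 1) * zpoly n z)
        = fun n : ℕ => c (n + 1) * zpoly (n + 1) (z + 1) - c (n + 1) * zpoly (n + 1) z := by
      funext n
      rw [← mul_sub, dx_zpoly n z hz]
    rw [heq]
    exact h3
  · intro g d _
    set a : ℕ → ℂ := fun n => (if n = 0 then 0 else c (n - 1)) * (starRingEnd ℂ) (d n) with ha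
    have ha1 : (fun n => a (n + 1)) = fun n => c n * (starRingEnd ℂ) (d (n + 1)) := by
      funext n; simp [ha]
    by_cases hs : Summable a
    · rw [Summable.tsum_eq_zero_add hs]
      rw [ha1]
      simp [ha]
    · rw [tsum_eq_zero_of_not_summable hs, tsum_eq_zero_of_not_summable ?_]
      rw [← ha1]
      exact fun hcon => hs ((summable_nat_add_iff 1).mp hcon)

end
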